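/- Let (X,d) be a metric space, let a_1,…,a_{n_a} (outlier points), c_1,…,c_{n_c} (clean points), and y_1,…,y_N be points of X with n_a ≥ 1, n_c ≥ 1, N ≥ 1, and set γ = n_a/(n_a+n_c) (so γ < 1). Let p_a, p_c be the uniform vectors on the outlier and clean points, let p_X be the uniform vector on all n_a+n_c points, and let q ∈ Δ^N be the uniform vector on y_1,…,y_N. Suppose W(p_a, p_c) = k · W(p_c, q) for some k ≥ 1. Then choosing ρ = γ/(2(1−γ)) yields W^rob_{ρ,0}(p_X, q) ≤ W(p_c, q). -/

import Mathlib

open Finset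

/-- Discrete optimal transport cost between weighted point configurations. -/
noncomputable def discreteW {X : Type*} [MetricSpace X] {M N : ℕ}
    (x : Fin M → X) (y : Fin N → X) (p : Fin M → ℝ) (q : Fin N → ℝ) : ℝ :=
  sInf { c : ℝ | ∃ π : Fin M → Fin N → ℝ,
    (∀ i j, 0 ≤ π i j) ∧ (∀ i, ∑ j, π i j = p i) ∧ (∀ j, ∑ i, π i j = q j) ∧
    c = ∑ i, ∑ j, π i j * dist (x i) (y j) }

/-- `p` is a probability vector. -/
def IsProbVec {M : ℕ} (p : Fin M → ℝ) : Prop := (∀ i, 0 ≤ p i) ∧ ∑ i, p i = 1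

/-- χ²-divergence between probability vectors, with generator f(t) = (t-1)²/2. -/
noncomputable def chiSqDiv {M : ℕ} (pt p : Fin M → ℝ) : ℝ :=
  ∑ i, p i * ((pt i / p i - 1) ^ 2 / 2)

/-- Robust optimal transport cost with marginal χ²-relaxation budgets ρ₁, ρ₂. -/
noncomputable def robustW {X : Type*} [MetricSpace X] {M N : ℕ}
    (x : Fin M → X) (y : Fin N → X) (p : Fin M → ℝ) (q : Fin N → ℝ) (ρ₁ ρ₂ : ℝ) : ℝ :=
  sInf { c : ℝ | ∃ pt qt, IsProbVec pt ∧ IsProbVec qt ∧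
    chiSqDiv pt p ≤ ρ₁ ∧ chiSqDiv qt q ≤ ρ₂ ∧ c = discreteW x y pt qt }

lemma discreteW_nonneg {X : Type*} [MetricSpace X] {M N : ℕ}
    (x : Fin M → X) (y : Fin N → X) (p : Fin M → ℝ) (q : Fin N → ℝ) :
    0 ≤ discreteW x y p q := by
  apply Real.sInf_nonneg
  rintro w ⟨π, h0, -, -, rfl⟩
  exact Finset.sum_nonneg fun i _ => Finset.sum_nonneg fun j _ =>
    mul_nonneg (h0 i j) dist_nonneg

theorem robustW_outlier_bound_choice {X : Type*} [MetricSpace X] {na nc N : ℕ}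
    (hna : 1 ≤ na) (hnc : 1 ≤ nc) (hN : 1 ≤ N)
    (a : Fin na → X) (c : Fin nc → X) (y : Fin N → X)
    (k : ℝ) (hk : 1 ≤ k)
    (γ : ℝ) (hγ : γ = (na : ℝ) / ((na : ℝ) + nc))
    (hW : discreteW a c (fun _ => 1 / (na : ℝ)) (fun _ => 1 / (nc : ℝ))
        = k * discreteW c y (fun _ => 1 / (nc : ℝ)) (fun _ => 1 / (N : ℝ))) :
    robustW (Fin.append a c) y (fun _ => 1 / ((na : ℝ) + nc)) (fun _ => 1 / (N : ℝ))
        (γ / (2 * (1 - γ))) 0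
      ≤ discreteW c y (fun _ => 1 / (nc : ℝ)) (fun _ => 1 / (N : ℝ)) := by
  have hA : (0:ℝ) < na := by exact_mod_cast hna
  have hC : (0:ℝ) < nc := by exact_mod_cast hnc
  have hNr : (0:ℝ) < N := by exact_mod_cast hN
  have hAC : (0:ℝ) < (na:ℝ) + nc := by linarith
  set pt : Fin (na + nc) → ℝ := Fin.append (fun _ => 0) (fun _ => 1 / (nc:ℝ)) with hpt
  -- p̃ is a probability vector
  have hprob_pt : IsProbVec pt := by
    constructor
    · intro i
      refine Fin.addCases (fun i => ?_) (fun i => ?_) i <;>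
        simp [hpt, Fin.append_left, Fin.append_right] <;> positivity
    · rw [hpt, Fin.sum_univ_add]
      simp [Fin.append_left, Fin.append_right, Finset.sum_const]
      field_simp
  have hprob_q : IsProbVec (fun _ : Fin N => 1 / (N:ℝ)) := by
    constructor
    · intro i; positivity
    · simp [Finset.sum_const]
      field_simp
  -- χ² constraints
  have hchi1 : chiSqDiv pt (fun _ => 1 / ((na:ℝ) + nc)) ≤ γ / (2 * (1 - γ)) := by
    have h1γ : 1 - γ = (nc:ℝ) / ((na:ℝ) + nc) := by
      rw [hγ]; field_simp; ring
    have hR : γ / (2 * (1 - γ)) = (na:ℝ) / (2 * nc) := by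
      rw [h1γ, hγ]; field_simp
    rw [chiSqDiv, hpt, Fin.sum_univ_add]
    simp only [Fin.append_left, Fin.append_right, Finset.sum_const, Finset.card_univ,
      Fintype.card_fin, nsmul_eq_mul]
    rw [hR]
    refine le_of_eq ?_
    field_simp
    ring
  have hchi2 : chiSqDiv (fun _ : Fin N => 1 / (N:ℝ)) (fun _ => 1 / (N:ℝ)) ≤ 0 := by
    rw [chiSqDiv]
    have : ∀ i : Fin N, (1/(N:ℝ)) * ((1/(N:ℝ) / (1/(N:ℝ)) - 1)^2/2) = 0 := by
      intro i
      rw [div_self (by positivity)]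
      ring
    exact le_of_eq (Finset.sum_eq_zero fun i _ => this i)
  -- step 1: robustW ≤ discreteW (append) pt q
  have step1 : robustW (Fin.append a c) y (fun _ => 1 / ((na:ℝ) + nc)) (fun _ => 1 / (N:ℝ))
      (γ / (2 * (1 - γ))) 0
      ≤ discreteW (Fin.append a c) y pt (fun _ => 1 / (N:ℝ)) := by
    apply csInf_le
    · refine ⟨0, ?_⟩
      rintro w ⟨pt', qt', -, -, -, -, rfl⟩
      exact discreteW_nonneg _ _ _ _
    · exact ⟨pt, _, hprob_pt, hprob_q, hchi1, hchi2, rfl⟩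
  -- step 2
  have step2 : discreteW (Fin.append a c) y pt (fun _ => 1 / (N:ℝ))
      ≤ discreteW c y (fun _ => 1 / (nc:ℝ)) (fun _ => 1 / (N:ℝ)) := by
    apply csInf_le_csInf
    · refine ⟨0, ?_⟩
      rintro w ⟨π, h0, -, -, rfl⟩
      exact Finset.sum_nonneg fun i _ => Finset.sum_nonneg fun j _ =>
        mul_nonneg (h0 i j) dist_nonneg
    · refine ⟨∑ i, ∑ j, ((1/(nc:ℝ)) * (1/(N:ℝ))) * dist (c i) (y j),
        (fun _ _ => (1/(nc:ℝ)) * (1/(N:ℝ))), fun i j => by positivity, ?_, ?_, rfl⟩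
      · intro i; simp [Finset.sum_const]; field_simp
      · intro j; simp [Finset.sum_const]; field_simp
    · rintro w ⟨π, h0, h1, h2, rfl⟩
      refine ⟨Fin.append (fun _ _ => 0) π, ?_, ?_, ?_, ?_⟩
      · intro i j
        refine Fin.addCases (fun i => ?_) (fun i => ?_) i <;>
          simp [Fin.append_left, Fin.append_right]
        exact h0 i j
      · intro i
        refine Fin.addCases (fun i => ?_) (fun i => ?_) i
        · simp [hpt, Fin.append_left]
        · simp only [hpt, Fin.append_right]
          simpa using h1 i
      · intro j
        rw [Fin.sum_univ_add]
        simp only [Fin.append_left, Fin.append_right, Pi.zero_apply]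
        simpa using h2 j
      · rw [Fin.sum_univ_add]
        simp [Fin.append_left, Fin.append_right]
  linarith
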